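/- Let g_h ⇀ g weakly in H¹(D) (D⊂ℝ^{n−1} open ball) with g_h = (f_h − a_h)/√ε_h where f_h are 1-Lipschitz, ∫_D |∇'f_h|² dx' ≤ C ε_h, and ε_h→0. If for every φ∈C¹_c(D) one has lim_h ε_h^{−1/2} ∫_D ⟨∇'f_h, ∇'φ⟩ / √(1+|∇'f_h|²) dx' = 0, then g is harmonic in D, i.e., ∫_D ⟨∇'g, ∇'φ⟩ dx' = 0 for all φ∈C¹_c(D). -/

import Mathlib

open MeasureTheory Metric Set Filter Topology

variable {F : Type*} [NormedAddCommGroup F] [InnerProductSpace ℝ F] [CompleteSpace F]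

lemma norm_gradient_eq (f : F → ℝ) (x : F) : ‖gradient f x‖ = ‖fderiv ℝ f x‖ := by
  rw [gradient]
  exact (InnerProductSpace.toDual ℝ F).symm.norm_map _

lemma gradient_sub_div_const (f : F → ℝ) (a c : ℝ) (hc : c ≠ 0) (x : F) :
    gradient (fun y => (f y - a) / c) x = c⁻¹ • gradient f x := by
  by_cases hd : DifferentiableAt ℝ f x
  · have h1 : HasFDerivAt (fun y => (f y - a) / c) (c⁻¹ • fderiv ℝ f x) x := by
      have : HasFDerivAt (fun y => c⁻¹ • (f y - a)) (c⁻¹ • fderiv ℝ f x) x :=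
        (hd.hasFDerivAt.sub_const a).const_smul c⁻¹
      simpa [div_eq_inv_mul, smul_eq_mul] using this
    rw [gradient, h1.fderiv, _root_.map_smul, gradient]
  · have h1 : ¬ DifferentiableAt ℝ (fun y => (f y - a) / c) x := by
      intro hcon
      have h2 : DifferentiableAt ℝ (fun y => ((f y - a) / c) * c + a) x :=
        (hcon.mul_const c).add_const a
      have he : (fun y => ((f y - a) / c) * c + a) = f := by
        funext y; field_simp; ring
      rw [he] at h2; exact hd h2
    rw [gradient_eq_zero_of_not_differentiableAt h1,
      gradient_eq_zero_of_not_differentiableAt hd, smul_zero]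

lemma measurable_gradient' [MeasurableSpace F] [BorelSpace F] (f : F → ℝ) :
    Measurable (gradient f) :=
  ((InnerProductSpace.toDual ℝ F).symm.continuous.measurable).comp (measurable_fderiv ℝ f)


/-- Blow-up step in the excess improvement: let `f_h` be 1-Lipschitz with
`∫_D |∇'f_h|² ≤ C ε_h`, `ε_h → 0`, and let `g_h = (f_h − a_h)/√ε_h ⇀ g` weakly in
`H¹(D)`.  If `ε_h^{−1/2} ∫_D ⟨∇'f_h, ∇'φ⟩/√(1+|∇'f_h|²) dx' → 0` for every
`φ ∈ C¹_c(D)`, then `g` is harmonic: `∫_D ⟨∇'g, ∇'φ⟩ dx' = 0` for all such `φ`. -/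
theorem blowup_limit_harmonic {m : ℕ} (R : ℝ) (hR : 0 < R)
    (f : ℕ → EuclideanSpace ℝ (Fin m) → ℝ)
    (hLip : ∀ h, LipschitzWith 1 (f h))
    (ε : ℕ → ℝ) (hεpos : ∀ h, 0 < ε h) (hε0 : Tendsto ε atTop (𝓝 0))
    (C : ℝ) (hC : 0 < C)
    (hgrad : ∀ h, ∫ x in ball (0 : EuclideanSpace ℝ (Fin m)) R,
      ‖gradient (f h) x‖ ^ 2 ≤ C * ε h)
    (a : ℕ → ℝ) (g : EuclideanSpace ℝ (Fin m) → ℝ)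
    (hweakL2 : ∀ φ : EuclideanSpace ℝ (Fin m) → ℝ, ContDiff ℝ 1 φ →
      HasCompactSupport φ → tsupport φ ⊆ ball (0 : EuclideanSpace ℝ (Fin m)) R →
      Tendsto (fun h => ∫ x in ball (0 : EuclideanSpace ℝ (Fin m)) R,
          ((f h x - a h) / Real.sqrt (ε h)) * φ x) atTop
        (𝓝 (∫ x in ball (0 : EuclideanSpace ℝ (Fin m)) R, g x * φ x)))
    (hweakH1 : ∀ φ : EuclideanSpace ℝ (Fin m) → ℝ, ContDiff ℝ 1 φ →
      HasCompactSupport φ → tsupport φ ⊆ ball (0 : EuclideanSpace ℝ (Fin m)) R →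
      Tendsto (fun h => ∫ x in ball (0 : EuclideanSpace ℝ (Fin m)) R,
          (inner ℝ (gradient (fun y => (f h y - a h) / Real.sqrt (ε h)) x)
            (gradient φ x) : ℝ)) atTop
        (𝓝 (∫ x in ball (0 : EuclideanSpace ℝ (Fin m)) R,
          (inner ℝ (gradient g x) (gradient φ x) : ℝ))))
    (hkey : ∀ φ : EuclideanSpace ℝ (Fin m) → ℝ, ContDiff ℝ 1 φ →
      HasCompactSupport φ → tsupport φ ⊆ ball (0 : EuclideanSpace ℝ (Fin m)) R →
      Tendsto (fun h => (Real.sqrt (ε h))⁻¹ *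
          ∫ x in ball (0 : EuclideanSpace ℝ (Fin m)) R,
            (inner ℝ (gradient (f h) x) (gradient φ x) : ℝ) /
              Real.sqrt (1 + ‖gradient (f h) x‖ ^ 2)) atTop (𝓝 0)) :
    ∀ φ : EuclideanSpace ℝ (Fin m) → ℝ, ContDiff ℝ 1 φ → HasCompactSupport φ →
      tsupport φ ⊆ ball (0 : EuclideanSpace ℝ (Fin m)) R →
      ∫ x in ball (0 : EuclideanSpace ℝ (Fin m)) R,
        (inner ℝ (gradient g x) (gradient φ x) : ℝ) = 0 := by
  intro φ hφ hφc hφs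
  set B : Set (EuclideanSpace ℝ (Fin m)) := ball 0 R with hB
  haveI hfin : IsFiniteMeasure (volume.restrict B) :=
    ⟨by rw [Measure.restrict_apply_univ]; exact measure_ball_lt_top⟩
  have hε0' : ∀ h, Real.sqrt (ε h) ≠ 0 := fun h =>
    ne_of_gt (Real.sqrt_pos.mpr (hεpos h))
  -- bound on ∇φ
  obtain ⟨M, hM⟩ := (hφc.fderiv (𝕜 := ℝ)).exists_bound_of_continuous (hφ.continuous_fderiv one_ne_zero)
  have hMφ : ∀ x, ‖gradient φ x‖ ≤ M := fun x => by
    rw [norm_gradient_eq]; exact hM x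
  have hM0 : 0 ≤ M := le_trans (norm_nonneg _) (hMφ 0)
  -- bound on ∇f
  have hgf1 : ∀ h x, ‖gradient (f h) x‖ ≤ 1 := fun h x => by
    rw [norm_gradient_eq]
    simpa using norm_fderiv_le_of_lipschitz ℝ (hLip h) (x₀ := x)
  -- integrands
  set X : ℕ → EuclideanSpace ℝ (Fin m) → ℝ :=
    fun h x => (inner ℝ (gradient (f h) x) (gradient φ x) : ℝ) with hX
  set Y : ℕ → EuclideanSpace ℝ (Fin m) → ℝ :=
    fun h x => X h x / Real.sqrt (1 + ‖gradient (f h) x‖ ^ 2) with hY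
  have hXb : ∀ h x, ‖X h x‖ ≤ M := by
    intro h x
    calc ‖X h x‖ ≤ ‖gradient (f h) x‖ * ‖gradient φ x‖ := norm_inner_le_norm _ _
      _ ≤ 1 * M := mul_le_mul (hgf1 h x) (hMφ x) (norm_nonneg _) zero_le_one
      _ = M := one_mul M
  have hXmeas : ∀ h, Measurable (X h) := fun h =>
    (measurable_gradient' (f h)).inner (measurable_gradient' φ)
  have hsqrt1 : ∀ h x, 1 ≤ Real.sqrt (1 + ‖gradient (f h) x‖ ^ 2) := by
    intro h x
    have := Real.sqrt_le_sqrt (show (1:ℝ) ≤ 1 + ‖gradient (f h) x‖ ^ 2 by nlinarith [sq_nonneg ‖gradient (f h) x‖])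
    rwa [Real.sqrt_one] at this
  have hYmeas : ∀ h, Measurable (Y h) := fun h =>
    (hXmeas h).div ((measurable_const.add
      (((measurable_gradient' (f h)).norm).pow_const 2)).sqrt)
  have hXint : ∀ h, Integrable (X h) (volume.restrict B) := fun h =>
    (integrable_const M).mono' (hXmeas h).aestronglyMeasurable
      (ae_of_all _ fun x => hXb h x)
  have hYint : ∀ h, Integrable (Y h) (volume.restrict B) := fun h =>
    (hXint h).mono (hYmeas h).aestronglyMeasurable (ae_of_all _ fun x => by
      have h1 := hsqrt1 h x
      have h0 : 0 < Real.sqrt (1 + ‖gradient (f h) x‖ ^ 2) := lt_of_lt_of_le one_pos h1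
      rw [hY]
      simp only [Real.norm_eq_abs, abs_div, abs_of_pos h0]
      exact div_le_self (abs_nonneg _) h1)
  have ht2int : ∀ h, Integrable (fun x => ‖gradient (f h) x‖ ^ 2) (volume.restrict B) :=
    fun h => (integrable_const 1).mono'
      (((measurable_gradient' (f h)).norm.pow_const 2).aestronglyMeasurable)
      (ae_of_all _ fun x => by
        have := hgf1 h x
        have h0 : (0:ℝ) ≤ ‖gradient (f h) x‖ := norm_nonneg _
        rw [Real.norm_eq_abs, abs_of_nonneg (by positivity)]
        nlinarith)
  -- pointwise bound for the error
  have hptw : ∀ h x, ‖X h x - Y h x‖ ≤ M * ‖gradient (f h) x‖ ^ 2 := by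
    intro h x
    set t := ‖gradient (f h) x‖ with ht
    set s := Real.sqrt (1 + t ^ 2) with hs
    have hs1 : 1 ≤ s := hsqrt1 h x
    have hs0 : 0 < s := lt_of_lt_of_le one_pos hs1
    have hinv1 : s⁻¹ ≤ 1 := by
      rw [inv_le_one_iff₀]; right; exact hs1
    have hsle : s ≤ 1 + t ^ 2 := by
      rw [hs]
      exact Real.sqrt_le_iff.mpr ⟨by positivity, by nlinarith [sq_nonneg t]⟩
    have hinv2 : (1 + t ^ 2)⁻¹ ≤ s⁻¹ := by
      exact inv_anti₀ hs0 hsle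
    have hinv3 : 1 - t ^ 2 ≤ (1 + t ^ 2)⁻¹ := by
      rw [inv_eq_one_div, le_div_iff₀ (by positivity)]
      nlinarith [sq_nonneg (t ^ 2)]
    have hfac : 1 - s⁻¹ ≤ t ^ 2 := by
      have := hinv3.trans hinv2
      linarith
    have hXY : X h x - Y h x = X h x * (1 - s⁻¹) := by
      rw [hY]; simp only [← hs, div_eq_mul_inv]; ring
    rw [hXY, norm_mul, Real.norm_eq_abs (1 - s⁻¹), abs_of_nonneg (by linarith)]
    have hXM : ‖X h x‖ ≤ M := hXb h x
    have ht2 : (0:ℝ) ≤ t ^ 2 := sq_nonneg t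
    exact mul_le_mul hXM hfac (by linarith) hM0
  -- integral error bound
  have hIb : ∀ h, ‖(∫ x in B, X h x) - ∫ x in B, Y h x‖ ≤ M * (C * ε h) := by
    intro h
    rw [← integral_sub (hXint h) (hYint h)]
    calc ‖∫ x in B, (X h x - Y h x)‖ ≤ ∫ x in B, ‖X h x - Y h x‖ :=
          norm_integral_le_integral_norm _
      _ ≤ ∫ x in B, M * ‖gradient (f h) x‖ ^ 2 := by
          apply integral_mono ((hXint h).sub (hYint h)).norm ((ht2int h).const_mul M)
          intro x; exact hptw h x
      _ = M * ∫ x in B, ‖gradient (f h) x‖ ^ 2 := integral_const_mul M _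
      _ ≤ M * (C * ε h) := mul_le_mul_of_nonneg_left (hgrad h) hM0
  -- the difference tends to 0
  have hdiff : Tendsto (fun h => (Real.sqrt (ε h))⁻¹ * (∫ x in B, X h x)
      - (Real.sqrt (ε h))⁻¹ * (∫ x in B, Y h x)) atTop (𝓝 0) := by
    apply squeeze_zero_norm (a := fun h => M * C * Real.sqrt (ε h))
    · intro h
      have heq : (Real.sqrt (ε h))⁻¹ * (∫ x in B, X h x)
          - (Real.sqrt (ε h))⁻¹ * (∫ x in B, Y h x)
          = (Real.sqrt (ε h))⁻¹ * ((∫ x in B, X h x) - ∫ x in B, Y h x) := by ring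
      rw [heq, norm_mul, norm_inv, Real.norm_of_nonneg (Real.sqrt_nonneg _)]
      have hsε : Real.sqrt (ε h) * Real.sqrt (ε h) = ε h :=
        Real.mul_self_sqrt (le_of_lt (hεpos h))
      calc (Real.sqrt (ε h))⁻¹ * ‖(∫ x in B, X h x) - ∫ x in B, Y h x‖
          ≤ (Real.sqrt (ε h))⁻¹ * (M * (C * ε h)) :=
            mul_le_mul_of_nonneg_left (hIb h) (inv_nonneg.mpr (Real.sqrt_nonneg _))
        _ = M * C * Real.sqrt (ε h) := by
            have h0 := hε0' h
            rw [← hsε]; field_simp; rw [Real.sqrt_sq (Real.sqrt_nonneg _)]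
    · have h1 : Tendsto (fun h => Real.sqrt (ε h)) atTop (𝓝 0) := by
        have := (Real.continuous_sqrt.tendsto 0).comp hε0
        simpa [Function.comp_def] using this
      have := h1.const_mul (M * C)
      simpa using this
  -- rewrite hweakH1's sequence
  have hkey' := hkey φ hφ hφc hφs
  have hkey'' : Tendsto (fun h => (Real.sqrt (ε h))⁻¹ * (∫ x in B, Y h x)) atTop (𝓝 0) := hkey'
  have hA : Tendsto (fun h => (Real.sqrt (ε h))⁻¹ * (∫ x in B, X h x)) atTop (𝓝 0) := by
    have hadd := hdiff.add hkey''
    have hfe : (fun h => ((Real.sqrt (ε h))⁻¹ * (∫ x in B, X h x)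
        - (Real.sqrt (ε h))⁻¹ * (∫ x in B, Y h x))
        + (Real.sqrt (ε h))⁻¹ * (∫ x in B, Y h x))
        = fun h => (Real.sqrt (ε h))⁻¹ * (∫ x in B, X h x) := by
      funext h; ring
    rw [hfe] at hadd
    simpa using hadd
  have heq : (fun h => ∫ x in B,
      (inner ℝ (gradient (fun y => (f h y - a h) / Real.sqrt (ε h)) x) (gradient φ x) : ℝ))
      = fun h => (Real.sqrt (ε h))⁻¹ * (∫ x in B, X h x) := by
    funext h
    rw [← integral_const_mul]
    apply integral_congr_ae
    filter_upwards with x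
    rw [gradient_sub_div_const (f h) (a h) _ (hε0' h), real_inner_smul_left, hX]
  have hw := hweakH1 φ hφ hφc hφs
  rw [heq] at hw
  exact tendsto_nhds_unique hw hA
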